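/- Let κ be a positive definite kernel on Ω, x_1,…,x_N ∈ Ω distinct, kernel matrix K invertible, and σ_n² > 0. Define the noisy GP posterior mean f*_noise(z) = K_X(z)(K + σ_n² I)^{-1} Y with Y_j = f(x_j), and the noisy predictive variance Var(z) = κ(z,z) − K_X(z)(K + σ_n² I)^{-1} K_X(z)^T. Then for every f in the native RKHS of κ and every z ∈ Ω there is a constant C ≥ 0 (independent of z) such that |f(z) − f*_noise(z)|² ≤ C · Var(z). -/

import Mathlib

open Matrix

/-- Error bound for GPR with noise regularization: there is `C ≥ 0` with
`|f(z) − f*_noise(z)|² ≤ C ⋅ Var_noise(z)` for all `z`. -/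
theorem stmt6 {Ω H : Type*} [NormedAddCommGroup H] [InnerProductSpace ℝ H]
    (Φ : Ω → H) (ev : H → Ω → ℝ)
    (hrepro : ∀ (f : H) (y : Ω), ev f y = (inner ℝ f (Φ y) : ℝ))
    (hpd : ∀ (M : ℕ) (y : Fin M → Ω), Function.Injective y →
      ∀ α : Fin M → ℝ, α ≠ 0 →
        0 < ∑ i, ∑ j, α i * α j * (inner ℝ (Φ (y i)) (Φ (y j)) : ℝ))
    {N : ℕ} (x : Fin N → Ω) (hx : Function.Injective x)
    (K : Matrix (Fin N) (Fin N) ℝ)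
    (hKdef : ∀ i j, K i j = (inner ℝ (Φ (x i)) (Φ (x j)) : ℝ))
    (hK : IsUnit K)
    (σsq : ℝ) (hσ : 0 < σsq) (f : H) :
    ∃ C : ℝ, 0 ≤ C ∧ ∀ z : Ω,
      |ev f z -
          (fun i => (inner ℝ (Φ (x i)) (Φ z) : ℝ)) ⬝ᵥ
            ((K + σsq • (1 : Matrix (Fin N) (Fin N) ℝ))⁻¹ *ᵥ fun j => ev f (x j))| ^ 2
        ≤ C *
          ((inner ℝ (Φ z) (Φ z) : ℝ) -
            (fun i => (inner ℝ (Φ (x i)) (Φ z) : ℝ)) ⬝ᵥ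
              ((K + σsq • (1 : Matrix (Fin N) (Fin N) ℝ))⁻¹ *ᵥ
                fun i => (inner ℝ (Φ (x i)) (Φ z) : ℝ))) := by
  classical
  set A : Matrix (Fin N) (Fin N) ℝ := K + σsq • 1 with hAdef
  -- symmetry of K and A
  have hKsym : Kᵀ = K := by
    ext i j
    simp [transpose_apply, hKdef, real_inner_comm]
  have hAsym : Aᵀ = A := by
    rw [hAdef, transpose_add, hKsym, transpose_smul, transpose_one]
  -- positive definiteness of A implies invertibility
  have hAdet : IsUnit A.det := by
    by_cases hN : N = 0
    · subst hN
      simp [Matrix.det_fin_zero]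
    · rw [isUnit_iff_ne_zero]
      intro hdet0
      obtain ⟨v, hv0, hvA⟩ := (Matrix.exists_mulVec_eq_zero_iff).mpr hdet0
      have hpos : 0 < v ⬝ᵥ (A *ᵥ v) := by
        have hKq : v ⬝ᵥ (K *ᵥ v) =
            ∑ i, ∑ j, v i * v j * (inner ℝ (Φ (x i)) (Φ (x j)) : ℝ) := by
          simp only [dotProduct, mulVec, dotProduct, Finset.mul_sum]
          exact Finset.sum_congr rfl fun i _ => Finset.sum_congr rfl fun j _ => by
            rw [hKdef]; ring
        have hA : v ⬝ᵥ (A *ᵥ v) = v ⬝ᵥ (K *ᵥ v) + σsq * (v ⬝ᵥ v) := by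
          rw [hAdef, add_mulVec, dotProduct_add, smul_mulVec, one_mulVec,
            dotProduct_smul, smul_eq_mul]
        have h1 : 0 < v ⬝ᵥ (K *ᵥ v) := by
          rw [hKq]; exact hpd N x hx v hv0
        have h2 : 0 ≤ σsq * (v ⬝ᵥ v) :=
          mul_nonneg hσ.le (Finset.sum_nonneg fun i _ => mul_self_nonneg _)
        linarith [hA]
      rw [hvA] at hpos
      simp at hpos
  have hAinv : A * A⁻¹ = 1 := Matrix.mul_nonsing_inv A hAdet
  have hAinvSym : A⁻¹ᵀ = A⁻¹ := by
    rw [Matrix.transpose_nonsing_inv, hAsym]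
  refine ⟨‖f‖ ^ 2, by positivity, fun z => ?_⟩
  set k : Fin N → ℝ := fun i => (inner ℝ (Φ (x i)) (Φ z) : ℝ) with hkdef
  set w : Fin N → ℝ := A⁻¹ *ᵥ k with hwdef
  set s : H := ∑ j, w j • Φ (x j) with hsdef
  have hAw : A *ᵥ w = k := by
    rw [hwdef, Matrix.mulVec_mulVec, hAinv, Matrix.one_mulVec]
  -- rewrite the predictor as ⟨f, s⟩
  have hswap : ∀ (Y : Fin N → ℝ), k ⬝ᵥ (A⁻¹ *ᵥ Y) = w ⬝ᵥ Y := by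
    intro Y
    rw [Matrix.dotProduct_mulVec, ← Matrix.mulVec_transpose, hAinvSym, ← hwdef]
  have hpred : k ⬝ᵥ (A⁻¹ *ᵥ fun j => ev f (x j)) = (inner ℝ f s : ℝ) := by
    rw [hswap, hsdef, inner_sum]
    simp only [dotProduct, real_inner_smul_right]
    exact Finset.sum_congr rfl fun j _ => by rw [hrepro]
  have herr : ev f z - k ⬝ᵥ (A⁻¹ *ᵥ fun j => ev f (x j)) = (inner ℝ f (Φ z - s) : ℝ) := by
    rw [hpred, hrepro, inner_sub_right]
  -- ⟨s, Φ z⟩ = w ⬝ᵥ k ; ⟨s, s⟩ = w ⬝ᵥ (K *ᵥ w)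
  have hsz : (inner ℝ s (Φ z) : ℝ) = w ⬝ᵥ k := by
    rw [hsdef, sum_inner]
    simp only [dotProduct, real_inner_smul_left, hkdef]
  have hss : (inner ℝ s s : ℝ) = w ⬝ᵥ (K *ᵥ w) := by
    rw [hsdef, sum_inner]
    simp only [dotProduct, mulVec, dotProduct, inner_sum, real_inner_smul_left,
      real_inner_smul_right, Finset.mul_sum]
    exact Finset.sum_congr rfl fun i _ => Finset.sum_congr rfl fun j _ => by
      rw [hKdef]; ring
  have hwKw : w ⬝ᵥ (K *ᵥ w) = w ⬝ᵥ k - σsq * (w ⬝ᵥ w) := by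
    have : w ⬝ᵥ (A *ᵥ w) = w ⬝ᵥ (K *ᵥ w) + σsq * (w ⬝ᵥ w) := by
      rw [hAdef, add_mulVec, dotProduct_add, smul_mulVec, one_mulVec,
        dotProduct_smul, smul_eq_mul]
    rw [hAw] at this
    linarith
  have hg : (inner ℝ (Φ z - s) (Φ z - s) : ℝ) =
      (inner ℝ (Φ z) (Φ z) : ℝ) - k ⬝ᵥ w - σsq * (w ⬝ᵥ w) := by
    rw [inner_sub_sub_self, hss, hwKw]
    have : (inner ℝ (Φ z) s : ℝ) = w ⬝ᵥ k := by rw [real_inner_comm]; exact hsz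
    rw [this, hsz, dotProduct_comm k w]
    ring
  have hVar : k ⬝ᵥ (A⁻¹ *ᵥ k) = k ⬝ᵥ w := by rw [hwdef]
  -- Cauchy–Schwarz
  have hCS : |(inner ℝ f (Φ z - s) : ℝ)| ^ 2 ≤ ‖f‖ ^ 2 * ‖Φ z - s‖ ^ 2 := by
    have h := abs_real_inner_le_norm f (Φ z - s)
    calc |(inner ℝ f (Φ z - s) : ℝ)| ^ 2 ≤ (‖f‖ * ‖Φ z - s‖) ^ 2 := by
          apply pow_le_pow_left₀ (abs_nonneg _) h
      _ = ‖f‖ ^ 2 * ‖Φ z - s‖ ^ 2 := by ring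
  have hnorm : ‖Φ z - s‖ ^ 2 = (inner ℝ (Φ z - s) (Φ z - s) : ℝ) :=
    (real_inner_self_eq_norm_sq (Φ z - s)).symm
  have hgle : ‖Φ z - s‖ ^ 2 ≤ (inner ℝ (Φ z) (Φ z) : ℝ) - k ⬝ᵥ w := by
    rw [hnorm, hg]
    have : 0 ≤ σsq * (w ⬝ᵥ w) := mul_nonneg hσ.le (Finset.sum_nonneg fun i _ => mul_self_nonneg _)
    linarith
  calc |ev f z - k ⬝ᵥ (A⁻¹ *ᵥ fun j => ev f (x j))| ^ 2
      = |(inner ℝ f (Φ z - s) : ℝ)| ^ 2 := by rw [herr]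
    _ ≤ ‖f‖ ^ 2 * ‖Φ z - s‖ ^ 2 := hCS
    _ ≤ ‖f‖ ^ 2 * ((inner ℝ (Φ z) (Φ z) : ℝ) - k ⬝ᵥ w) :=
        mul_le_mul_of_nonneg_left hgle (by positivity)
    _ = ‖f‖ ^ 2 * ((inner ℝ (Φ z) (Φ z) : ℝ) - k ⬝ᵥ (A⁻¹ *ᵥ k)) := by rw [hVar]
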